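/- Let p₁ ≠ p₂ be primes, A a nontrivial finite abelian p₁-group and B a nontrivial finite abelian p₂-group. Then any nonconstant function f : A → B has infinite functional degree. -/

import Mathlib

/-- The discrete difference operator: `(dOp g f) x = f (x + g) - f x`. -/
def dOp {A B : Type*} [AddCommGroup A] [AddCommGroup B] (g : A) (f : A → B) : A → B :=
  fun x => f (x + g) - f x

/-- `f` has functional degree at most `m` (w.r.t. the generating set `A` itself):
all `(m+1)`-fold derivatives vanish. -/
def DegLE {A B : Type*} [AddCommGroup A] [AddCommGroup B] (f : A → B) (m : ℕ) : Prop :=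
  ∀ gs : List A, gs.length = m + 1 → gs.foldr (fun g h => dOp g h) f = 0

namespace NonconstAux

open Polynomial

variable {A B : Type*} [AddCommGroup A] [AddCommGroup B]

/-- The shift operator. -/
def sh (B : Type*) [AddCommGroup B] (g : A) : Module.End ℤ (A → B) where
  toFun f := fun x => f (x + g)
  map_add' _ _ := rfl
  map_smul' _ _ := rfl

lemma sh_mul (g h : A) : (sh B g) * (sh B h) = sh B (g + h) := by
  ext f x
  show f (x + g + h) = f (x + (g + h))
  rw [add_assoc]

lemma sh_pow (g : A) (n : ℕ) : (sh B g) ^ n = sh B (n • g) := by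
  induction n with
  | zero =>
    ext f x
    show f x = f (x + (0 : ℕ) • g)
    simp
  | succ n ih =>
    rw [pow_succ, ih, sh_mul, succ_nsmul']
    rw [add_comm g (n • g)]

/-- The difference operator as an endomorphism. -/
def D (B : Type*) [AddCommGroup B] (g : A) : Module.End ℤ (A → B) := sh B g - 1

lemma D_apply (g : A) (f : A → B) : D B g f = dOp g f := rfl

lemma D_comm (g h : A) : (D B g) * (D B h) = (D B h) * (D B g) := by
  ext f x
  show (D B h f) (x + g) - (D B h f) x = (D B g f) (x + h) - (D B g f) x
  show f (x + g + h) - f (x + g) - (f (x + h) - f x)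
      = f (x + h + g) - f (x + h) - (f (x + g) - f x)
  rw [add_right_comm x h g]
  abel

lemma replicate_foldr (g : A) (f : A → B) (n : ℕ) :
    (List.replicate n g).foldr (fun g h => dOp g h) f = ((D B g) ^ n) f := by
  induction n with
  | zero => simp [List.replicate]
  | succ n ih =>
    rw [List.replicate_succ, List.foldr_cons, ih, pow_succ']
    rfl

lemma key_dvd (p : ℕ) (hp : p.Prime) (s : ℕ) :
    (C (p : ℤ)) ∣ ((X - 1) ^ (p ^ s) - (X ^ (p ^ s) - 1)) := by
  rw [C_dvd_iff_dvd_coeff]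
  intro i
  haveI := Fact.mk hp
  have hmap : (((X - 1 : ℤ[X]) ^ (p ^ s) - (X ^ (p ^ s) - 1)).map
      (Int.castRingHom (ZMod p))) = 0 := by
    simp only [Polynomial.map_sub, Polynomial.map_pow, Polynomial.map_one, Polynomial.map_X]
    rw [sub_pow_char_pow, one_pow, sub_self]
  have := congrArg (fun q => Polynomial.coeff q i) hmap
  simp only [Polynomial.coeff_map, Polynomial.coeff_zero] at this
  exact_mod_cast (ZMod.intCast_zmod_eq_zero_iff_dvd _ _).mp this

lemma D_pow_eq (p : ℕ) (hp : p.Prime) (s : ℕ) (g : A) :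
    ∃ E : Module.End ℤ (A → B),
      (D B g) ^ (p ^ s) = D B ((p ^ s) • g) + (p : ℤ) • E := by
  obtain ⟨h, hh⟩ := key_dvd p hp s
  refine ⟨Polynomial.aeval (sh B g) h, ?_⟩
  have hXq : Polynomial.aeval (sh B g) ((X : ℤ[X]) ^ (p ^ s) - 1) = D B ((p ^ s) • g) := by
    rw [map_sub, map_pow, Polynomial.aeval_X, map_one, sh_pow]
    rfl
  have hX1 : Polynomial.aeval (sh B g) (((X : ℤ[X]) - 1) ^ (p ^ s)) = (D B g) ^ (p ^ s) := by
    rw [map_pow, map_sub, Polynomial.aeval_X, map_one]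
    rfl
  have := congrArg (Polynomial.aeval (sh B g)) (sub_eq_iff_eq_add.mp hh)
  rw [map_add, hXq, hX1, map_mul, Polynomial.aeval_C] at this
  rw [this, add_comm]
  congr 1

/-- Telescoping sum. -/
lemma telescope (g : A) (f : A → B) (x : A) (n : ℕ) :
    (Finset.range n).sum (fun j => (D B g f) (x + j • g)) = f (x + n • g) - f x := by
  induction n with
  | zero => simp
  | succ n ih =>
    rw [Finset.sum_range_succ, ih]
    show f (x + n • g) - f x + (f (x + n • g + g) - f (x + n • g)) = _
    rw [succ_nsmul, ← add_assoc]
    abel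

lemma main [Finite A] (p₁ p₂ : ℕ) (hp₁ : p₁.Prime) (hp₂ : p₂.Prime) (hne : p₁ ≠ p₂)
    (hA : ∃ k : ℕ, Nat.card A = p₁ ^ k) (m : ℕ) :
    ∀ (e : ℕ) (f : A → B), (∀ x, ((p₂ : ℤ) ^ e) • f x = 0) →
      (∀ g : A, ((D B g) ^ (m + 1)) f = 0) → ∀ x, f x = f 0 := by
  intro e
  induction e with
  | zero =>
    intro f hann _ x
    have h1 : ∀ y, f y = 0 := fun y => by simpa using hann y
    rw [h1 x, h1 0]
  | succ e ih =>
    intro f hann hder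
    have hDg : ∀ g : A, D B g f = 0 := by
      intro g
      set N := Nat.card A with hNdef
      have hN : 0 < N := Nat.card_pos
      have hcop : Nat.Coprime p₂ N := by
        obtain ⟨k, hk⟩ := hA
        rw [hk]
        exact ((Nat.coprime_primes hp₂ hp₁).mpr hne.symm).pow_right k
      have htot : 0 < N.totient := Nat.totient_pos.mpr hN
      set s := (m + 1) * N.totient with hsdef
      set q := p₂ ^ s with hqdef
      have hq1 : q ≡ 1 [MOD N] := by
        rw [hqdef, hsdef, pow_mul']
        calc (p₂ ^ N.totient) ^ (m + 1) ≡ 1 ^ (m + 1) [MOD N] :=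
              (Nat.ModEq.pow_totient hcop).pow (m + 1)
        _ = 1 := one_pow _
      have hsm : m + 1 ≤ s := by
        calc m + 1 = (m + 1) * 1 := (mul_one _).symm
        _ ≤ (m + 1) * N.totient := Nat.mul_le_mul_left _ htot
      have hqm : m + 1 ≤ q := by
        calc m + 1 ≤ s := hsm
        _ ≤ 2 ^ s := Nat.le_of_lt (Nat.lt_two_pow_self (n := s))
        _ ≤ p₂ ^ s := Nat.pow_le_pow_left hp₂.two_le s
      -- high pure derivative vanishes
      have hDq : ((D B g) ^ q) f = 0 := by
        have : (D B g) ^ q = (D B g) ^ (q - (m + 1)) * (D B g) ^ (m + 1) := by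
          rw [← pow_add, Nat.sub_add_cancel hqm]
        rw [this, Module.End.mul_apply, hder g, map_zero]
      -- q • g = g
      have hqg : q • g = g := by
        have hmod : q % N = 1 % N := hq1
        have hdecomp : q = N * (q / N) + q % N := (Nat.div_add_mod q N).symm
        have hNg : N • g = 0 := by
          rw [hNdef]
          exact card_nsmul_eq_zero'
        have h1N : (1 % N) • g = g := by
          have hdecomp1 : (1 : ℕ) = N * (1 / N) + 1 % N := (Nat.div_add_mod 1 N).symm
          have : (1 : ℕ) • g = (N * (1 / N)) • g + (1 % N) • g := by
            rw [← add_nsmul, ← hdecomp1]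
          rw [one_nsmul] at this
          rw [mul_nsmul, hNg, smul_zero, zero_add] at this
          exact this.symm
        calc q • g = (N * (q / N)) • g + (q % N) • g := by rw [← add_nsmul, ← hdecomp]
        _ = (q % N) • g := by rw [mul_nsmul, hNg, smul_zero, zero_add]
        _ = g := by rw [hmod, h1N]
      obtain ⟨E, hE⟩ := D_pow_eq (B := B) p₂ hp₂ s g
      rw [← hqdef, hqg] at hE
      have hEq : D B g f + (p₂ : ℤ) • (E f) = 0 := by
        have := congrArg (fun (L : Module.End ℤ (A → B)) => L f) hE
        simp only [LinearMap.add_apply, LinearMap.smul_apply] at this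
        rw [← this, hDq]
      -- annihilator for f' := D B g f
      have hfz : ((p₂ : ℤ) ^ (e + 1)) • f = 0 := funext fun x => hann x
      have hEfz : ((p₂ : ℤ) ^ (e + 1)) • (E f) = 0 := by
        rw [← map_smul, hfz, map_zero]
      have hann' : ∀ x, ((p₂ : ℤ) ^ e) • (D B g f) x = 0 := by
        intro x
        have hDgf : D B g f = -((p₂ : ℤ) • (E f)) := eq_neg_of_add_eq_zero_left hEq
        rw [hDgf]
        have : ((p₂ : ℤ) ^ e) • ((p₂ : ℤ) • (E f)) = ((p₂ : ℤ) ^ (e + 1)) • (E f) := by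
          rw [smul_smul, ← pow_succ]
        calc ((p₂ : ℤ) ^ e) • (-((p₂ : ℤ) • (E f))) x
            = -(((p₂ : ℤ) ^ e) • ((p₂ : ℤ) • (E f))) x := by
              simp [Pi.neg_apply, Pi.smul_apply]
        _ = -(((p₂ : ℤ) ^ (e + 1)) • (E f)) x := by rw [this]
        _ = 0 := by rw [hEfz]; simp
      have hder' : ∀ h : A, ((D B h) ^ (m + 1)) (D B g f) = 0 := by
        intro h
        have hcomm : (D B g) * (D B h) ^ (m + 1) = (D B h) ^ (m + 1) * (D B g) :=
          (Commute.pow_right (show Commute (D B g) (D B h) from D_comm g h) (m + 1))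
        calc ((D B h) ^ (m + 1)) (D B g f) = ((D B h) ^ (m + 1) * (D B g)) f := rfl
        _ = ((D B g) * (D B h) ^ (m + 1)) f := by rw [hcomm]
        _ = D B g (((D B h) ^ (m + 1)) f) := rfl
        _ = 0 := by rw [hder h, map_zero]
      -- IH : f' is constant
      have hconst := ih (D B g f) hann' hder'
      set c := (D B g f) 0 with hcdef
      -- N • c = 0
      have hNc : (N : ℤ) • c = 0 := by
        have := telescope g f 0 N
        have hNg : N • g = 0 := by rw [hNdef]; exact card_nsmul_eq_zero'
        rw [hNg, add_zero, sub_self] at this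
        have hsum : (Finset.range N).sum (fun j => (D B g f) ((0 : A) + j • g)) = N • c := by
          rw [Finset.sum_congr rfl (fun j _ => hconst ((0 : A) + j • g))]
          simp [Finset.sum_const]
        rw [hsum] at this
        rw [natCast_zsmul]
        exact this
      -- p₂ ^ e • c = 0
      have hpc : ((p₂ : ℤ) ^ e) • c = 0 := hann' 0
      -- coprimality kills c
      have hcop2 : Nat.Coprime (p₂ ^ e) N := hcop.pow_left e
      have hbez : (1 : ℤ) = (p₂ ^ e : ℕ) * Nat.gcdA (p₂ ^ e) N + N * Nat.gcdB (p₂ ^ e) N := by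
        have := Nat.gcd_eq_gcd_ab (p₂ ^ e) N
        rwa [hcop2, Nat.cast_one] at this
      have hc0 : c = 0 := by
        have : c = (1 : ℤ) • c := (one_smul ℤ c).symm
        rw [this, hbez, add_smul, mul_comm ((p₂ ^ e : ℕ) : ℤ), mul_comm ((N : ℕ) : ℤ),
          mul_smul, mul_smul]
        have h1 : ((p₂ ^ e : ℕ) : ℤ) • c = 0 := by
          rw [Nat.cast_pow]
          exact_mod_cast hpc
        have h2 : ((N : ℕ) : ℤ) • c = 0 := hNc
        rw [h1, h2, smul_zero, smul_zero, add_zero]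
      -- conclude D B g f = 0
      funext x
      show (D B g f) x = (0 : B)
      rw [hconst x, hc0]
    intro x
    have := congrFun (hDg x) 0
    have h2 : f (0 + x) - f 0 = 0 := this
    rw [zero_add] at h2
    exact sub_eq_zero.mp h2

end NonconstAux

/-- A nonconstant function from a nontrivial finite abelian `p₁`-group to a nontrivial
finite abelian `p₂`-group (`p₁ ≠ p₂` primes) has infinite functional degree. -/
theorem nonconstant_infinite_degree {A B : Type*} [AddCommGroup A] [AddCommGroup B]
    [Finite A] [Finite B] (p₁ p₂ : ℕ) (hp₁ : p₁.Prime) (hp₂ : p₂.Prime) (hne : p₁ ≠ p₂)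
    (hA : ∃ k : ℕ, Nat.card A = p₁ ^ k) (hB : ∃ k : ℕ, Nat.card B = p₂ ^ k)
    (hA1 : 1 < Nat.card A) (hB1 : 1 < Nat.card B)
    (f : A → B) (hf : ∃ a a' : A, f a ≠ f a') :
    ∀ m : ℕ, ¬ DegLE f m := by
  intro m hDeg
  obtain ⟨kB, hkB⟩ := hB
  have hder : ∀ g : A, ((NonconstAux.D B g) ^ (m + 1)) f = 0 := by
    intro g
    rw [← NonconstAux.replicate_foldr]
    exact hDeg _ (by simp)
  have hann : ∀ x, ((p₂ : ℤ) ^ kB) • f x = 0 := by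
    intro x
    have h1 : Nat.card B • f x = 0 := card_nsmul_eq_zero'
    rw [hkB] at h1
    calc ((p₂ : ℤ) ^ kB) • f x = ((p₂ ^ kB : ℕ) : ℤ) • f x := by push_cast; ring_nf
    _ = (p₂ ^ kB : ℕ) • f x := natCast_zsmul _ _
    _ = 0 := h1
  have hconst := NonconstAux.main p₁ p₂ hp₁ hp₂ hne hA m kB f hann hder
  obtain ⟨a, a', ha⟩ := hf
  exact ha (by rw [hconst a, hconst a'])
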